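/- Let ρ ≥ 2, c ≥ 0, and for μ ≥ 1 let ξ(μ) be the unique positive root of (1/ε(μ))^{ξ(μ)} = 2μ where ε(μ) = 4(c+1)·ln(2ρ)/ξ(μ). Then ξ(μ) > 4(c+1)·ln(2ρ) > 1 and ε(μ) < 1 for all μ ≥ 1, and ξ(μ) = Θ(log μ / log log μ) as μ → ∞ for fixed ρ, c. -/

import Mathlib

set_option maxHeartbeats 1000000

open Real Filter Asymptotics

/-- strict monotonicity of x ↦ x log(x/H) on [H, ∞) -/
lemma xiMono (H a b : ℝ) (hH : 0 < H) (ha : H ≤ a) (hab : a < b) :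
    a * Real.log (a / H) < b * Real.log (b / H) := by
  have h1 : (1:ℝ) ≤ a / H := (one_le_div hH).2 ha
  have hb0 : 0 < b := lt_of_le_of_lt (hH.le.trans ha) hab
  have hlog : Real.log (a / H) < Real.log (b / H) := by
    apply Real.log_lt_log (by positivity)
    exact div_lt_div_of_pos_right hab hH
  calc a * Real.log (a / H) ≤ b * Real.log (a / H) :=
        mul_le_mul_of_nonneg_right hab.le (Real.log_nonneg h1)
    _ < b * Real.log (b / H) := mul_lt_mul_of_pos_left hlog hb0

/-- existence of the root -/
lemma exRoot (H μ : ℝ) (hH : 1 ≤ H) (hμ : 1 ≤ μ) :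
    ∃ x : ℝ, H < x ∧ x * Real.log (x / H) = Real.log (2 * μ) := by
  have hH0 : 0 < H := lt_of_lt_of_le one_pos hH
  set B : ℝ := 2 * μ * H with hB
  have hHB : H ≤ B := by nlinarith
  have hcont : ContinuousOn (fun x : ℝ => x * Real.log (x / H)) (Set.Icc H B) := by
    apply ContinuousOn.mul continuousOn_id
    apply ContinuousOn.log
    · exact continuousOn_id.div_const H
    · intro x hx
      have : 0 < x := lt_of_lt_of_le hH0 hx.1
      positivity
  have hL0 : 0 < Real.log (2 * μ) := Real.log_pos (by linarith)
  have hfa : (fun x : ℝ => x * Real.log (x / H)) H = 0 := by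
    simp [div_self (ne_of_gt hH0)]
  have hfb : Real.log (2 * μ) ≤ B * Real.log (B / H) := by
    have h1 : B / H = 2 * μ := by field_simp; linarith [hB]
    rw [h1]
    nlinarith [hL0.le]
  have hIVT := intermediate_value_Icc hHB hcont
  have hmem : Real.log (2 * μ) ∈ Set.Icc ((fun x : ℝ => x * Real.log (x / H)) H)
      ((fun x : ℝ => x * Real.log (x / H)) B) := by
    refine ⟨?_, hfb⟩
    rw [hfa]; exact hL0.le
  obtain ⟨x, hxI, hxv⟩ := hIVT hmem
  refine ⟨x, ?_, hxv⟩
  rcases lt_or_eq_of_le hxI.1 with h | h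
  · exact h
  · exfalso
    rw [← h] at hxv
    simp only [div_self (ne_of_gt hH0), Real.log_one, mul_zero] at hxv
    linarith

/-- the two-sided bound for large μ -/
lemma xiBounds (H μ x : ℝ) (hH : 1 < H) (hμ : 1 ≤ μ)
    (hm : H ^ 2 + 9 ≤ Real.log μ) (hx : H < x)
    (hfx : x * Real.log (x / H) = Real.log (2 * μ)) :
    Real.log μ / Real.log (Real.log μ) ≤ 4 * x ∧
    x ≤ 8 * (Real.log μ / Real.log (Real.log μ)) ∧
    0 < Real.log μ / Real.log (Real.log μ) := by
  have hH0 : 0 < H := lt_trans one_pos hH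
  set m : ℝ := Real.log μ with hmm
  have hm10 : (10:ℝ) ≤ m := by nlinarith [sq_nonneg (H - 1)]
  have hμ0 : (0:ℝ) < μ := by linarith
  set L : ℝ := Real.log (2 * μ) with hLL
  have hLsplit : L = Real.log 2 + m := by
    rw [hLL, Real.log_mul two_ne_zero (ne_of_gt hμ0)]
  have hlog2 : (0:ℝ) < Real.log 2 := Real.log_pos (by norm_num)
  have hlog2lt : Real.log 2 < 1 := by
    have := Real.log_two_lt_d9; linarith
  have hmL : m ≤ L := by linarith
  have hL2m : L ≤ 2 * m := by linarith
  have hL0 : (0:ℝ) < L := by linarith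
  have hexp1 : Real.exp 1 < 3 := by
    have := Real.exp_one_lt_d9; linarith
  have hlogm1 : (1:ℝ) ≤ Real.log m := by
    rw [Real.le_log_iff_exp_le (by linarith)]
    linarith
  have hlogm0 : (0:ℝ) < Real.log m := by linarith
  have hlogLlb : Real.log m ≤ Real.log L := Real.log_le_log (by linarith) hmL
  have hlogLub : Real.log L ≤ 2 * Real.log m := by
    calc Real.log L ≤ Real.log (2 * m) := Real.log_le_log hL0 hL2m
      _ = Real.log 2 + Real.log m := Real.log_mul two_ne_zero (by linarith)
      _ ≤ 2 * Real.log m := by linarith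
  have hlogL1 : (1:ℝ) ≤ Real.log L := le_trans hlogm1 hlogLlb
  have hlogL0 : (0:ℝ) < Real.log L := by linarith
  set κ : ℝ := Real.log (x / H) with hκκ
  have hx0 : 0 < x := lt_trans hH0 hx
  have hκ0 : 0 < κ := Real.log_pos ((one_lt_div hH0).2 hx)
  -- Step A : H * L ≤ x^2
  have hstepA : H * L ≤ x ^ 2 := by
    have h1 : κ ≤ x / H - 1 := Real.log_le_sub_one_of_pos (by positivity)
    have h2 : L ≤ x * (x / H) := by
      rw [← hfx]
      have hdp : 0 < x / H := by positivity
      nlinarith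
    rw [div_eq_mul_inv] at h2
    have h3 := mul_le_mul_of_nonneg_left h2 hH0.le
    calc H * L ≤ H * (x * (x * H⁻¹)) := h3
      _ = x ^ 2 * (H * H⁻¹) := by ring
      _ = x ^ 2 := by rw [mul_inv_cancel₀ (ne_of_gt hH0), mul_one]
  -- Step B : κ ≥ log L / 4
  have hlogH0 : 0 ≤ Real.log H := Real.log_nonneg hH.le
  have hlogHL : Real.log H + Real.log L ≤ 2 * Real.log x := by
    have h1 : Real.log (H * L) ≤ Real.log (x ^ 2) :=
      Real.log_le_log (by positivity) hstepA
    rw [Real.log_mul (ne_of_gt hH0) (ne_of_gt hL0), Real.log_pow] at h1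
    push_cast at h1
    linarith
  have hlogHhalf : 2 * Real.log H ≤ Real.log L := by
    have h1 : Real.log (H ^ 2) ≤ Real.log L := Real.log_le_log (by positivity) (by linarith)
    rw [Real.log_pow] at h1
    push_cast at h1
    linarith
  have hκeq : κ = Real.log x - Real.log H :=
    Real.log_div (ne_of_gt hx0) (ne_of_gt hH0)
  have hκlb : Real.log L / 4 ≤ κ := by
    rw [hκeq]; linarith
  have hxeq : x = L / κ := by
    field_simp
    linarith [hfx]
  have hxub' : x ≤ 4 * (L / Real.log L) := by
    rw [hxeq]
    calc L / κ ≤ L / (Real.log L / 4) := by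
          gcongr
      _ = 4 * (L / Real.log L) := by
          rw [div_div_eq_mul_div]; ring
  have hLdivub : L / Real.log L ≤ 2 * (m / Real.log m) := by
    calc L / Real.log L ≤ L / Real.log m := by gcongr
      _ ≤ (2 * m) / Real.log m := by gcongr
      _ = 2 * (m / Real.log m) := by ring
  have hG0 : 0 < m / Real.log m := div_pos (by linarith) hlogm0
  refine ⟨?_, by linarith, hG0⟩
  -- Step C : lower bound
  have hxL2 : x ≤ L ^ 2 := by
    have h1 : L / Real.log L ≤ L / 1 := by gcongr
    rw [div_one] at h1
    have h2 : x ≤ 4 * L := by linarith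
    nlinarith [mul_nonneg (by linarith : (0:ℝ) ≤ L - 4) hL0.le]
  have hlogxub : Real.log x ≤ 2 * Real.log L := by
    calc Real.log x ≤ Real.log (L ^ 2) := Real.log_le_log hx0 hxL2
      _ = 2 * Real.log L := by
          rw [Real.log_pow]; push_cast; ring
  have hκub : κ ≤ 2 * Real.log L := by
    rw [hκeq]; linarith
  have hxlb : L / (2 * Real.log L) ≤ x := by
    rw [hxeq]
    gcongr
  have hLdivlb : m / Real.log m ≤ 4 * (L / (2 * Real.log L)) := by
    calc m / Real.log m ≤ L / Real.log m := by gcongr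
      _ = 2 * L / (2 * Real.log m) := by
          rw [mul_div_mul_left _ _ (by norm_num : (2:ℝ) ≠ 0)]
      _ ≤ 2 * L / Real.log L := by gcongr
      _ = 4 * (L / (2 * Real.log L)) := by
          field_simp; ring
  linarith

/-- With H = 4(c+1)ln(2ρ) > 1, for each μ ≥ 1 there is a unique positive root ξ(μ)
of (ξ/H)^ξ = 2μ (equivalently (1/ε)^ξ = 2μ with ε = H/ξ); moreover ξ(μ) > H > 1,
ε(μ) < 1, and ξ(μ) = Θ(log μ / log log μ). -/
theorem stmt12 (ρ : ℝ) (c : ℕ) (hρ : 2 ≤ ρ) :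
    (1 : ℝ) < 4 * ((c : ℝ) + 1) * Real.log (2 * ρ) ∧
    ∃ ξ : ℝ → ℝ,
      (∀ μ : ℝ, 1 ≤ μ →
        4 * ((c : ℝ) + 1) * Real.log (2 * ρ) < ξ μ ∧
        (ξ μ / (4 * ((c : ℝ) + 1) * Real.log (2 * ρ))) ^ (ξ μ) = 2 * μ ∧
        (4 * ((c : ℝ) + 1) * Real.log (2 * ρ)) / ξ μ < 1 ∧
        ∀ y : ℝ, 0 < y →
          (y / (4 * ((c : ℝ) + 1) * Real.log (2 * ρ))) ^ y = 2 * μ → y = ξ μ) ∧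
      Asymptotics.IsTheta Filter.atTop ξ
        (fun μ : ℝ => Real.log μ / Real.log (Real.log μ)) := by
  set H : ℝ := 4 * ((c : ℝ) + 1) * Real.log (2 * ρ) with hHdef
  have hlog4 : (1:ℝ) < Real.log (2 * ρ) := by
    rw [Real.lt_log_iff_exp_lt (by linarith)]
    have := Real.exp_one_lt_d9
    linarith
  have hc1 : (1:ℝ) ≤ (c : ℝ) + 1 := by have : (0:ℝ) ≤ (c:ℝ) := Nat.cast_nonneg c; linarith
  have hH : (1:ℝ) < H := by nlinarith
  refine ⟨hH, ?_⟩
  classical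
  refine ⟨fun μ => if h : 1 ≤ μ then (exRoot H μ hH.le h).choose else 1, ?_, ?_⟩
  · intro μ hμ
    have hspec := (exRoot H μ hH.le hμ).choose_spec
    set x : ℝ := (exRoot H μ hH.le hμ).choose with hxdef
    obtain ⟨hHx, hfx⟩ := hspec
    have hx0 : 0 < x := lt_trans (lt_trans one_pos hH) hHx
    have hH0 : (0:ℝ) < H := lt_trans one_pos hH
    simp only [dif_pos hμ]
    refine ⟨hHx, ?_, ?_, ?_⟩
    · rw [Real.rpow_def_of_pos (by positivity : (0:ℝ) < x / H)]
      rw [mul_comm, hfx, Real.exp_log (by linarith)]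
    · rw [div_lt_one hx0]; exact hHx
    · intro y hy hyeq
      have hHy : H < y := by
        by_contra hcon
        push_neg at hcon
        have h1 : (y / H) ^ y ≤ 1 :=
          Real.rpow_le_one (by positivity) ((div_le_one hH0).2 hcon) hy.le
        rw [hyeq] at h1
        linarith
      have hylog : y * Real.log (y / H) = Real.log (2 * μ) := by
        rw [← hyeq, Real.log_rpow (by positivity)]
      rcases lt_trichotomy y x with h | h | h
      · exfalso
        have := xiMono H y x hH0 hHy.le h
        rw [hylog, hfx] at this
        exact lt_irrefl _ this
      · exact h
      · exfalso
        have := xiMono H x y hH0 hHx.le h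
        rw [hylog, hfx] at this
        exact lt_irrefl _ this
  · -- IsTheta
    have hev : ∀ᶠ μ : ℝ in atTop, 1 ≤ μ ∧ H ^ 2 + 9 ≤ Real.log μ :=
      (eventually_ge_atTop 1).and (Real.tendsto_log_atTop.eventually_ge_atTop (H ^ 2 + 9))
    have key : ∀ᶠ μ : ℝ in atTop,
        (Real.log μ / Real.log (Real.log μ) ≤
          4 * (if h : 1 ≤ μ then (exRoot H μ hH.le h).choose else 1) ∧
        (if h : 1 ≤ μ then (exRoot H μ hH.le h).choose else 1) ≤
          8 * (Real.log μ / Real.log (Real.log μ)) ∧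
        0 < Real.log μ / Real.log (Real.log μ)) ∧
        0 < (if h : 1 ≤ μ then (exRoot H μ hH.le h).choose else 1) := by
      filter_upwards [hev] with μ ⟨hμ, hm⟩
      have hspec := (exRoot H μ hH.le hμ).choose_spec
      simp only [dif_pos hμ]
      exact ⟨xiBounds H μ _ hH hμ hm hspec.1 hspec.2,
        lt_trans (lt_trans one_pos hH) hspec.1⟩
    constructor
    · apply Asymptotics.IsBigO.of_bound 8
      filter_upwards [key] with μ ⟨⟨h1, h2, h3⟩, h4⟩
      rw [Real.norm_of_nonneg h4.le, Real.norm_of_nonneg h3.le]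
      exact h2
    · apply Asymptotics.IsBigO.of_bound 4
      filter_upwards [key] with μ ⟨⟨h1, h2, h3⟩, h4⟩
      rw [Real.norm_of_nonneg h4.le, Real.norm_of_nonneg h3.le]
      exact h1
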